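/- Let Λ ⊆ ℤ₊ⁿ be a finite nonempty set, let S₀ ⊆ S ⊆ {1,…,n}, and let F be a nonempty face of N(Λ,S). Suppose there is q = (q_1,…,q_n) ∈ (F*)°|N(Λ,S) with q_j = 0 for every j ∈ S₀ and q_j > 0 for every j ∈ S \ S₀ (no condition on q_j for j ∉ S). Then F = F + ℝ₊^{S₀} (Minkowski sum) and F = N(Λ ∩ F, S₀). -/

import Mathlib

open scoped RealInnerProductSpace Pointwise

noncomputable section

/-- A subset `F ⊆ P` is a face of `P` if there are `q ∈ ℝⁿ` and `ρ ∈ ℝ` with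
`⟨q, u⟩ = ρ` for every `u ∈ F` and `ρ < ⟨q, y⟩` for every `y ∈ P \ F`. -/
def IsFace {n : ℕ} (P F : Set (EuclideanSpace ℝ (Fin n))) : Prop :=
  F ⊆ P ∧ ∃ (q : EuclideanSpace ℝ (Fin n)) (ρ : ℝ),
    (∀ u ∈ F, ⟪q, u⟫ = ρ) ∧ ∀ y ∈ P \ F, ρ < ⟪q, y⟫

/-- The interior `(F*)°|P` of the cone of a face `F` of `P`. -/
def coneInterior {n : ℕ} (P F : Set (EuclideanSpace ℝ (Fin n))) :
    Set (EuclideanSpace ℝ (Fin n)) :=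
  {q | q ≠ 0 ∧ ∃ ρ : ℝ, (∀ u ∈ F, ⟪q, u⟫ = ρ) ∧ ∀ y ∈ P \ F, ρ < ⟪q, y⟫}

/-- The embedding of `ℤ₊ⁿ` into `ℝⁿ`. -/
def toR {n : ℕ} (m : Fin n → ℕ) : EuclideanSpace ℝ (Fin n) := WithLp.toLp 2 (fun j => (m j : ℝ))

/-- `ℝ₊^S = {u ∈ ℝⁿ : uⱼ ≥ 0 for j ∈ S and uⱼ = 0 for j ∉ S}`. -/
def RplusS {n : ℕ} (S : Set (Fin n)) : Set (EuclideanSpace ℝ (Fin n)) :=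
  {u | ∀ j, (j ∈ S → 0 ≤ u j) ∧ (j ∉ S → u j = 0)}

/-- The Newton polyhedron `Ch(A + ℝ₊^S)` of a set `A ⊆ ℝⁿ`. -/
def newtonSet {n : ℕ} (A : Set (EuclideanSpace ℝ (Fin n))) (S : Set (Fin n)) :
    Set (EuclideanSpace ℝ (Fin n)) :=
  convexHull ℝ (A + RplusS S)

/-- The Newton polyhedron `N(Ω, S) = Ch(Ω + ℝ₊^S)` of `Ω ⊆ ℤ₊ⁿ`. -/
def newton {n : ℕ} (Ω : Set (Fin n → ℕ)) (S : Set (Fin n)) :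
    Set (EuclideanSpace ℝ (Fin n)) :=
  newtonSet (toR '' Ω) S

lemma inner_eq_sum {n : ℕ} (q v : EuclideanSpace ℝ (Fin n)) : ⟪q, v⟫ = ∑ j, q j * v j := by
  simp [PiLp.inner_apply, RCLike.inner_apply, conj_trivial]
  exact Finset.sum_congr rfl fun j _ => mul_comm _ _

lemma zero_mem_RplusS {n : ℕ} (S : Set (Fin n)) : (0 : EuclideanSpace ℝ (Fin n)) ∈ RplusS S := by
  intro j; exact ⟨fun _ => le_refl _, fun _ => rfl⟩

lemma convex_RplusS {n : ℕ} (S : Set (Fin n)) : Convex ℝ (RplusS S) := by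
  intro x hx y hy a b ha hb _ j
  have hxj := hx j; have hyj := hy j
  constructor
  · intro hjS
    have : (0:ℝ) ≤ a * x j + b * y j :=
      add_nonneg (mul_nonneg ha (hxj.1 hjS)) (mul_nonneg hb (hyj.1 hjS))
    simpa [PiLp.add_apply, PiLp.smul_apply, smul_eq_mul] using this
  · intro hjS
    simp [PiLp.add_apply, PiLp.smul_apply, smul_eq_mul, hxj.2 hjS, hyj.2 hjS]

/-- Representation of unbounded faces: if a nonempty face `F` of `N(Λ,S)` admits a normal
`q ∈ (F*)°` with `qⱼ = 0` for `j ∈ S₀` and `qⱼ > 0` for `j ∈ S \ S₀`, then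
`F = F + ℝ₊^{S₀}` and `F = N(Λ ∩ F, S₀)`. -/
theorem stmt12 {n : ℕ} (Λ : Set (Fin n → ℕ)) (hfin : Λ.Finite) (hne : Λ.Nonempty)
    (S S₀ : Set (Fin n)) (hS : S₀ ⊆ S)
    (F : Set (EuclideanSpace ℝ (Fin n)))
    (hF : IsFace (newton Λ S) F) (hFne : F.Nonempty)
    (q : EuclideanSpace ℝ (Fin n)) (hq : q ∈ coneInterior (newton Λ S) F)
    (hq0 : ∀ j ∈ S₀, q j = 0) (hqpos : ∀ j ∈ S \ S₀, 0 < q j) :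
    F = F + RplusS S₀ ∧ F = newtonSet ((toR '' Λ) ∩ F) S₀ := by
  obtain ⟨hFP, -⟩ := hF
  obtain ⟨-, ρ, hqF, hqP⟩ := hq
  set A : Set (EuclideanSpace ℝ (Fin n)) := toR '' Λ with hA
  -- basic facts
  have hPle : ∀ y ∈ newton Λ S, ρ ≤ ⟪q, y⟫ := by
    intro y hy
    by_cases h : y ∈ F
    · exact le_of_eq (hqF y h).symm
    · exact le_of_lt (hqP y ⟨hy, h⟩)
  have hmemF : ∀ y ∈ newton Λ S, ⟪q, y⟫ = ρ → y ∈ F := by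
    intro y hy hval
    by_contra h
    have := hqP y ⟨hy, h⟩
    linarith
  -- inner product with R₊^{S₀} vanishes
  have hzero : ∀ v ∈ RplusS S₀, ⟪q, v⟫ = 0 := by
    intro v hv
    rw [inner_eq_sum]
    apply Finset.sum_eq_zero
    intro j _
    by_cases hj : j ∈ S₀
    · rw [hq0 j hj, zero_mul]
    · rw [(hv j).2 hj, mul_zero]
  -- inner product with R₊^S is nonneg, and zero forces membership in R₊^{S₀}
  have hterm_nonneg : ∀ v ∈ RplusS S, ∀ j, 0 ≤ q j * v j := by
    intro v hv j
    by_cases hjS : j ∈ S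
    · by_cases hj0 : j ∈ S₀
      · rw [hq0 j hj0, zero_mul]
      · exact mul_nonneg (le_of_lt (hqpos j ⟨hjS, hj0⟩)) ((hv j).1 hjS)
    · rw [(hv j).2 hjS, mul_zero]
  have hnonneg : ∀ v ∈ RplusS S, 0 ≤ ⟪q, v⟫ := by
    intro v hv
    rw [inner_eq_sum]
    exact Finset.sum_nonneg fun j _ => hterm_nonneg v hv j
  have hS0mem : ∀ v ∈ RplusS S, ⟪q, v⟫ = 0 → v ∈ RplusS S₀ := by
    intro v hv hval
    rw [inner_eq_sum] at hval
    have hall : ∀ j ∈ Finset.univ, q j * v j = 0 :=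
      (Finset.sum_eq_zero_iff_of_nonneg fun j _ => hterm_nonneg v hv j).1 hval
    intro j
    refine ⟨fun hj => (hv j).1 (hS hj), fun hj => ?_⟩
    by_cases hjS : j ∈ S
    · have hqj : 0 < q j := hqpos j ⟨hjS, hj⟩
      have := hall j (Finset.mem_univ j)
      exact (mul_eq_zero.1 this).resolve_left (ne_of_gt hqj)
    · exact (hv j).2 hjS
  -- R₊^S + R₊^{S₀} ⊆ R₊^S
  have hsum_sub : ∀ u ∈ RplusS S, ∀ v ∈ RplusS S₀, u + v ∈ RplusS S := by
    intro u hu v hv j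
    constructor
    · intro hjS
      have h1 : 0 ≤ u j := (hu j).1 hjS
      have h2 : 0 ≤ v j := by
        by_cases hj0 : j ∈ S₀
        · exact (hv j).1 hj0
        · rw [(hv j).2 hj0]
      simpa [PiLp.add_apply] using add_nonneg h1 h2
    · intro hjS
      have h1 : u j = 0 := (hu j).2 hjS
      have h2 : v j = 0 := (hv j).2 fun hj0 => hjS (hS hj0)
      simp [PiLp.add_apply, h1, h2]
  -- P is stable under adding R₊^{S₀}
  have hPstable : ∀ u ∈ newton Λ S, ∀ v ∈ RplusS S₀, u + v ∈ newton Λ S := by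
    intro u hu v hv
    have h1 : u + v ∈ convexHull ℝ (A + RplusS S) + RplusS S₀ :=
      Set.add_mem_add hu hv
    have h2 : convexHull ℝ (A + RplusS S) + RplusS S₀
        ⊆ convexHull ℝ (A + RplusS S) + convexHull ℝ (RplusS S₀) := by
      apply Set.add_subset_add_left
      exact subset_convexHull ℝ _
    have h3 : convexHull ℝ (A + RplusS S) + convexHull ℝ (RplusS S₀)
        = convexHull ℝ ((A + RplusS S) + RplusS S₀) := (convexHull_add _ _).symm
    have h4 : (A + RplusS S) + RplusS S₀ ⊆ A + RplusS S := by
      rintro x hx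
      rw [Set.mem_add] at hx
      obtain ⟨y, hy, w, hw, hyx⟩ := hx
      rw [Set.mem_add] at hy
      obtain ⟨a, ha, u', hu', hau⟩ := hy
      rw [Set.mem_add]
      exact ⟨a, ha, u' + w, hsum_sub u' hu' w hw, by rw [← hyx, ← hau]; abel⟩
    exact (convexHull_mono h4) (h3 ▸ h2 h1)
  -- points of F + R₊^{S₀} belong to F
  have hFadd : ∀ u ∈ F, ∀ v ∈ RplusS S₀, u + v ∈ F := by
    intro u hu v hv
    apply hmemF _ (hPstable u (hFP hu) v hv)
    rw [inner_add_right, hqF u hu, hzero v hv, add_zero]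
  -- first statement
  have part1 : F = F + RplusS S₀ := by
    apply Set.Subset.antisymm
    · intro x hx
      rw [Set.mem_add]
      exact ⟨x, hx, 0, zero_mem_RplusS S₀, add_zero x⟩
    · rintro x hx
      rw [Set.mem_add] at hx
      obtain ⟨u, hu, v, hv, huv⟩ := hx
      exact huv ▸ hFadd u hu v hv
  -- F is convex (needed to bound the convex hull)
  have hFconv : Convex ℝ F := by
    have : F = (newton Λ S) ∩ {y | ⟪q, y⟫ = ρ} := by
      apply Set.Subset.antisymm
      · exact fun y hy => ⟨hFP hy, hqF y hy⟩
      · rintro y ⟨hy1, hy2⟩; exact hmemF y hy1 hy2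
    rw [this]
    apply (convex_convexHull ℝ _).inter
    intro x hx y hy a b _ _ hab
    simp only [Set.mem_setOf_eq] at hx hy ⊢
    rw [inner_add_right, real_inner_smul_right, real_inner_smul_right, hx, hy]
    linear_combination ρ * hab
  -- second statement
  have part2 : F = newtonSet (A ∩ F) S₀ := by
    apply Set.Subset.antisymm
    · -- hard direction
      intro u hu
      have huP := hFP hu
      rw [newton, newtonSet, convexHull_eq] at huP
      obtain ⟨ι, t, w, z, hw0, hw1, hz, hcm⟩ := huP
      have hz' : ∀ i ∈ t, ∃ a ∈ A, ∃ v ∈ RplusS S, a + v = z i := by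
        intro i hi
        exact Set.mem_add.1 (hz i hi)
      choose! a ha v hv hav using hz'
      -- a i ∈ P
      have haP : ∀ i ∈ t, a i ∈ newton Λ S := by
        intro i hi
        apply subset_convexHull ℝ _
        rw [Set.mem_add]
        exact ⟨a i, ha i hi, 0, zero_mem_RplusS S, add_zero _⟩
      have hzP : ∀ i ∈ t, z i ∈ newton Λ S := by
        intro i hi
        exact subset_convexHull ℝ _ (hz i hi)
      -- ⟪q, u⟫ = ∑ w i * ⟪q, z i⟫
      have hval : ∑ i ∈ t, w i * ⟪q, z i⟫ = ρ := by
        have : u = ∑ i ∈ t, w i • z i := by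
          rw [← hcm, Finset.centerMass_eq_of_sum_1 t z hw1]
        calc ∑ i ∈ t, w i * ⟪q, z i⟫ = ⟪q, ∑ i ∈ t, w i • z i⟫ := by
              rw [inner_sum]
              exact Finset.sum_congr rfl fun i _ => (real_inner_smul_right q (z i) (w i)).symm
          _ = ⟪q, u⟫ := by rw [← this]
          _ = ρ := hqF u hu
      have hsum0 : ∑ i ∈ t, w i * (⟪q, z i⟫ - ρ) = 0 := by
        have heq : ∑ i ∈ t, w i * (⟪q, z i⟫ - ρ)
            = (∑ i ∈ t, w i * ⟪q, z i⟫) - (∑ i ∈ t, w i) * ρ := by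
          rw [Finset.sum_mul, ← Finset.sum_sub_distrib]
          exact Finset.sum_congr rfl fun i _ => by ring
        rw [heq, hval, hw1, one_mul, sub_self]
      have hkey : ∀ i ∈ t, w i * (⟪q, z i⟫ - ρ) = 0 :=
        (Finset.sum_eq_zero_iff_of_nonneg fun i hi =>
          mul_nonneg (hw0 i hi) (sub_nonneg.2 (hPle (z i) (hzP i hi)))).1 hsum0
      -- for i with w i ≠ 0, z i ∈ (A ∩ F) + R₊^{S₀}
      have hzmem : ∀ i ∈ t, w i ≠ 0 → z i ∈ (A ∩ F) + RplusS S₀ := by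
        intro i hi hwi
        have hzi : ⟪q, z i⟫ = ρ := by
          have := hkey i hi
          rcases mul_eq_zero.1 this with h | h
          · exact absurd h hwi
          · linarith [sub_eq_zero.1 h]
        have hsplit : ⟪q, a i⟫ + ⟪q, v i⟫ = ρ := by
          rw [← inner_add_right, hav i hi, hzi]
        have h1 : ρ ≤ ⟪q, a i⟫ := hPle (a i) (haP i hi)
        have h2 : 0 ≤ ⟪q, v i⟫ := hnonneg (v i) (hv i hi)
        have ha_val : ⟪q, a i⟫ = ρ := by linarith
        have hv_val : ⟪q, v i⟫ = 0 := by linarith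
        rw [Set.mem_add]
        exact ⟨a i, ⟨ha i hi, hmemF (a i) (haP i hi) ha_val⟩,
          v i, hS0mem (v i) (hv i hi) hv_val, hav i hi⟩
      -- conclude
      rw [newtonSet]
      classical
      have := Finset.centerMass_filter_ne_zero (t := t) (w := w) z
      rw [← hcm, ← this]
      apply Finset.centerMass_mem_convexHull
      · intro i hi
        exact hw0 i (Finset.mem_filter.1 hi).1
      · rw [Finset.sum_filter_ne_zero, hw1]; exact one_pos
      · intro i hi
        obtain ⟨hit, hwi⟩ := Finset.mem_filter.1 hi
        exact hzmem i hit hwi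
    · -- easy direction
      rw [newtonSet]
      apply convexHull_min _ hFconv
      rintro x hx
      rw [Set.mem_add] at hx
      obtain ⟨a', ⟨_, haF⟩, v', hv', hx⟩ := hx
      exact hx ▸ hFadd a' haF v' hv'
  exact ⟨part1, part2⟩
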